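/- arXiv:1902.05907 — 2 statements merged into one kernel-verified Lean document; each statement's English description precedes it below -/
import Mathlib

section
/- There exist functions a, x ∈ S(0,∞) such that K_u(a) = K_u(x) for every u > 0, while μ(t; a) < μ(t; x) for all t in a set of positive Lebesgue measure. Consequently, there is no additive map T on measurable functions satisfying ‖Th‖₀ ≤ ‖h‖₀ for all h ∈ L₀(0,∞) and ‖Th‖∞ ≤ ‖h‖∞ for all h ∈ L∞(0,∞) with Ta = x; that is, the unit ball of the K-orbit of a does not coincide with the unit ball of the orbit of a in the pair (L₀(0,∞), L∞(0,∞)). -/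
open MeasureTheory Filter Set
open scoped ENNReal NNReal

/-- Lebesgue measure on `(0, ∞)`. -/
noncomputable def mLeb : Measure ℝ := volume.restrict (Set.Ioi (0:ℝ))

/-- The distribution function `d_f(s) = m {t ∈ (0,∞) : |f t| > s}`. -/
noncomputable def distFun (f : ℝ → ℝ) (s : ℝ) : ℝ≥0∞ := mLeb {t | s < |f t|}

/-- `f ∈ S(0,∞)`: `f` is measurable and `d_f(s) < ∞` for some `s > 0`. -/
def MemS (f : ℝ → ℝ) : Prop := Measurable f ∧ ∃ s > (0:ℝ), distFun f s < ⊤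

/-- `‖g‖₀ = m (supp g)`, the `L₀`-group-norm. -/
noncomputable def norm0 (g : ℝ → ℝ) : ℝ≥0∞ := mLeb (Function.support g)

/-- `‖h‖∞`, the essential supremum norm on `(0,∞)`. -/
noncomputable def normInf (h : ℝ → ℝ) : ℝ≥0∞ := eLpNorm h ⊤ mLeb

/-- `g ∈ L₀(0,∞)`: measurable with support of finite measure. -/
def MemL0 (g : ℝ → ℝ) : Prop := Measurable g ∧ norm0 g < ⊤

/-- `h ∈ L∞(0,∞)`: measurable and essentially bounded. -/
def MemLinf (h : ℝ → ℝ) : Prop := Measurable h ∧ normInf h < ⊤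

/-- The K-functional `K_u(f) = inf {‖g‖₀ + u‖h‖∞ : f = g + h, g ∈ L₀, h ∈ L∞}`. -/
noncomputable def Kfun (u : ℝ) (f : ℝ → ℝ) : ℝ≥0∞ :=
  ⨅ (g : ℝ → ℝ) (h : ℝ → ℝ) (_ : MemL0 g) (_ : MemLinf h) (_ : f = g + h),
    norm0 g + ENNReal.ofReal u * normInf h

/-- The decreasing rearrangement `μ(t; f) = inf {s ≥ 0 : d_f(s) ≤ t}`. -/
noncomputable def rearr (f : ℝ → ℝ) (t : ℝ) : ℝ :=
  sInf {s : ℝ | 0 ≤ s ∧ distFun f s ≤ ENNReal.ofReal t}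

/-- The Δ-norm `‖f‖_S = inf_{s>0} [s + d_f(s)]`. -/
noncomputable def normS (f : ℝ → ℝ) : ℝ≥0∞ :=
  ⨅ (s : ℝ) (_ : 0 < s), ENNReal.ofReal s + distFun f s

noncomputable def aF : ℝ → ℝ := fun t => max (1 - t) 0
noncomputable def xF : ℝ → ℝ := (Set.Ioc (0:ℝ) 1).indicator 1

lemma mLeb_apply (s : Set ℝ) : mLeb s = volume (s ∩ Set.Ioi 0) :=
  Measure.restrict_apply' measurableSet_Ioi

lemma aF_meas : Measurable aF := (measurable_const.sub measurable_id).max measurable_const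

lemma xF_meas : Measurable xF := (measurable_const.indicator measurableSet_Ioc)

lemma distFun_aF {s : ℝ} (hs : 0 ≤ s) : distFun aF s = ENNReal.ofReal (1 - s) := by
  have hset : {t : ℝ | s < |aF t|} = Set.Iio (1 - s) := by
    ext t
    have h0 : (0:ℝ) ≤ max (1 - t) 0 := le_max_right _ _
    simp only [Set.mem_setOf_eq, Set.mem_Iio, aF, abs_of_nonneg h0, lt_max_iff]
    constructor
    · rintro (h | h) <;> linarith
    · intro h; left; linarith
  rw [distFun, hset, mLeb_apply, Set.Iio_inter_Ioi, Real.volume_Ioo, sub_zero]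

lemma distFun_xF {s : ℝ} (hs0 : 0 ≤ s) (hs : s < 1) : distFun xF s = 1 := by
  have hset : {t : ℝ | s < |xF t|} = Set.Ioc (0:ℝ) 1 := by
    ext t
    simp only [Set.mem_setOf_eq]
    by_cases ht : t ∈ Set.Ioc (0:ℝ) 1
    · simp [xF, Set.indicator_of_mem ht, ht, hs]
    · simp only [xF, Set.indicator_of_notMem ht, abs_zero, ht, iff_false]
      exact not_lt.mpr hs0
  rw [distFun, hset, mLeb_apply]
  rw [Set.inter_eq_left.mpr (fun t ht => ht.1)]
  simp [Real.volume_Ioc]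

lemma abs_xF_le (t : ℝ) : |xF t| ≤ 1 := by
  by_cases ht : t ∈ Set.Ioc (0:ℝ) 1
  · simp [xF, Set.indicator_of_mem ht]
  · simp [xF, Set.indicator_of_notMem ht]

lemma distFun_xF_ge {s : ℝ} (hs : 1 ≤ s) : distFun xF s = 0 := by
  have hset : {t : ℝ | s < |xF t|} = (∅ : Set ℝ) := by
    ext t
    simp only [Set.mem_setOf_eq, Set.mem_empty_iff_false, iff_false, not_lt]
    exact (abs_xF_le t).trans hs
  rw [distFun, hset]; simp

lemma support_aF : Function.support aF = Set.Iio 1 := by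
  ext t
  simp only [Function.mem_support, aF, Set.mem_Iio]
  constructor
  · intro h
    by_contra ht
    push_neg at ht
    exact h (max_eq_right (by linarith))
  · intro h
    have : (0:ℝ) < max (1 - t) 0 := lt_max_iff.mpr (Or.inl (by linarith))
    exact ne_of_gt this

lemma norm0_aF : norm0 aF = 1 := by
  rw [norm0, support_aF, mLeb_apply, Set.Iio_inter_Ioi, Real.volume_Ioo]
  norm_num

lemma norm0_xF : norm0 xF = 1 := by
  have hsupp : Function.support xF = Set.Ioc (0:ℝ) 1 := by
    ext t
    simp only [Function.mem_support]
    by_cases ht : t ∈ Set.Ioc (0:ℝ) 1 <;>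
      simp [xF, Set.indicator_of_mem, Set.indicator_of_notMem, ht]
  rw [norm0, hsupp, mLeb_apply, Set.inter_eq_left.mpr (fun t ht => ht.1), Real.volume_Ioc]
  norm_num

lemma normInf_aF_le : normInf aF ≤ 1 := by
  rw [normInf, eLpNorm_exponent_top]
  have : ∀ᵐ t ∂mLeb, ‖aF t‖ ≤ 1 := by
    rw [mLeb]
    filter_upwards [ae_restrict_mem measurableSet_Ioi] with t ht
    have : (0:ℝ) < t := ht
    rw [Real.norm_eq_abs, abs_of_nonneg (le_max_right _ _), aF]
    exact max_le (by linarith) (by norm_num)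
  simpa using eLpNormEssSup_le_of_ae_bound this

lemma normInf_xF_le : normInf xF ≤ 1 := by
  rw [normInf, eLpNorm_exponent_top]
  have : ∀ᵐ t ∂mLeb, ‖xF t‖ ≤ 1 := ae_of_all _ fun t => by
    rw [Real.norm_eq_abs]; exact abs_xF_le t
  simpa using eLpNormEssSup_le_of_ae_bound this


lemma norm0_zero : norm0 (0 : ℝ → ℝ) = 0 := by
  rw [norm0]
  have : Function.support (0 : ℝ → ℝ) = ∅ := Function.support_zero
  rw [this]; simp

lemma normInf_zero : normInf (0 : ℝ → ℝ) = 0 := by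
  rw [normInf]; exact eLpNorm_zero

lemma Kfun_le {u : ℝ} {f g h : ℝ → ℝ} (hg : MemL0 g) (hh : MemLinf h)
    (hfgh : f = g + h) : Kfun u f ≤ norm0 g + ENNReal.ofReal u * normInf h :=
  iInf_le_of_le g <| iInf_le_of_le h <| iInf_le_of_le hg <| iInf_le_of_le hh <|
    iInf_le_of_le hfgh le_rfl

lemma memL0_aF : MemL0 aF := ⟨aF_meas, by rw [norm0_aF]; exact ENNReal.one_lt_top⟩
lemma memL0_xF : MemL0 xF := ⟨xF_meas, by rw [norm0_xF]; exact ENNReal.one_lt_top⟩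
lemma memLinf_aF : MemLinf aF :=
  ⟨aF_meas, lt_of_le_of_lt normInf_aF_le ENNReal.one_lt_top⟩
lemma memLinf_xF : MemLinf xF :=
  ⟨xF_meas, lt_of_le_of_lt normInf_xF_le ENNReal.one_lt_top⟩
lemma memL0_zero : MemL0 (0 : ℝ → ℝ) := ⟨measurable_zero, by rw [norm0_zero]; simp⟩
lemma memLinf_zero : MemLinf (0 : ℝ → ℝ) := ⟨measurable_zero, by rw [normInf_zero]; simp⟩

lemma Kfun_le_min {u : ℝ} {f : ℝ → ℝ} (hf0 : MemL0 f) (hfi : MemLinf f)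
    (h0 : norm0 f = 1) (hi : normInf f ≤ 1) :
    Kfun u f ≤ min 1 (ENNReal.ofReal u) := by
  apply le_min
  · have := Kfun_le (u := u) hf0 memLinf_zero (by simp : f = f + 0)
    rwa [normInf_zero, mul_zero, add_zero, h0] at this
  · have := Kfun_le (u := u) memL0_zero hfi (by simp : f = 0 + f)
    rw [norm0_zero, zero_add] at this
    exact this.trans (by
      calc ENNReal.ofReal u * normInf f ≤ ENNReal.ofReal u * 1 :=
        mul_le_mul_right hi _
      _ = ENNReal.ofReal u := mul_one _)

lemma norm0_ge {f g h : ℝ → ℝ} (hfgh : f = g + h) {s : ℝ} (hs : 0 ≤ s)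
    (hbound : normInf h ≤ ENNReal.ofReal s) : distFun f s ≤ norm0 g := by
  have hae : ∀ᵐ t ∂mLeb, |h t| ≤ s := by
    filter_upwards [ae_le_eLpNormEssSup (f := h) (μ := mLeb)] with t ht
    have h1 : ENNReal.ofReal |h t| ≤ ENNReal.ofReal s := by
      calc ENNReal.ofReal |h t| = (‖h t‖₊ : ℝ≥0∞) := by
            rw [← enorm_eq_nnnorm, Real.enorm_eq_ofReal_abs]
        _ ≤ eLpNormEssSup h mLeb := ht
        _ ≤ ENNReal.ofReal s := by rwa [normInf, eLpNorm_exponent_top] at hbound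
    exact (ENNReal.ofReal_le_ofReal_iff hs).mp h1
  have hnull : mLeb {t | s < |h t|} = 0 := by
    have := ae_iff.mp hae
    simpa only [not_le] using this
  have hsub : {t | s < |f t|} ⊆ Function.support g ∪ {t | s < |h t|} := by
    intro t ht
    by_cases hg : g t = 0
    · right
      have : f t = h t := by rw [hfgh]; simp [hg]
      simpa [this] using ht
    · left; exact hg
  calc distFun f s ≤ mLeb (Function.support g ∪ {t | s < |h t|}) := measure_mono hsub
    _ ≤ mLeb (Function.support g) + mLeb {t | s < |h t|} := measure_union_le _ _
    _ = norm0 g := by rw [hnull, add_zero, norm0]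

lemma Kfun_ge_aux {u : ℝ} (hu : 0 < u) {f : ℝ → ℝ}
    (hdf : ∀ s : ℝ, 0 ≤ s → s < 1 →
      ENNReal.ofReal (1 - s) ≤ distFun f s ∨ (1:ℝ≥0∞) ≤ distFun f s) :
    min 1 (ENNReal.ofReal u) ≤ Kfun u f := by
  refine le_iInf fun g => le_iInf fun h => le_iInf fun hg => le_iInf fun hh =>
    le_iInf fun hfgh => ?_
  set c := normInf h with hcdef
  by_cases hc : 1 ≤ c
  · calc min 1 (ENNReal.ofReal u) ≤ ENNReal.ofReal u := min_le_right _ _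
      _ = ENNReal.ofReal u * 1 := (mul_one _).symm
      _ ≤ ENNReal.ofReal u * c := mul_le_mul_right hc _
      _ ≤ norm0 g + ENNReal.ofReal u * c := le_add_self
  · push_neg at hc
    set s := c.toReal with hsdef
    have hcne : c ≠ ⊤ := (hc.trans ENNReal.one_lt_top).ne
    have hs0 : 0 ≤ s := ENNReal.toReal_nonneg
    have hceq : c = ENNReal.ofReal s := (ENNReal.ofReal_toReal hcne).symm
    have hs1 : s < 1 := by
      have := (ENNReal.toReal_lt_toReal hcne ENNReal.one_ne_top).mpr hc
      simpa using this
    have hd : distFun f s ≤ norm0 g := norm0_ge hfgh hs0 (by rw [← hceq])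
    rcases hdf s hs0 hs1 with hcase | hcase
    · calc min 1 (ENNReal.ofReal u) ≤ ENNReal.ofReal (1 - s + u * s) := by
            rcases le_total u 1 with h1 | h1
            · rw [min_eq_right (ENNReal.ofReal_le_one.mpr h1)]
              exact ENNReal.ofReal_le_ofReal (by nlinarith)
            · rw [min_eq_left (ENNReal.one_le_ofReal.mpr h1)]
              exact ENNReal.one_le_ofReal.mpr (by nlinarith)
        _ = ENNReal.ofReal (1 - s) + ENNReal.ofReal (u * s) :=
            ENNReal.ofReal_add (by linarith) (by positivity)
        _ = ENNReal.ofReal (1 - s) + ENNReal.ofReal u * ENNReal.ofReal s := by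
            rw [ENNReal.ofReal_mul hu.le]
        _ ≤ norm0 g + ENNReal.ofReal u * c :=
            add_le_add (le_trans hcase hd) (by rw [hceq])
    · calc min 1 (ENNReal.ofReal u) ≤ 1 := min_le_left _ _
        _ ≤ norm0 g := le_trans hcase hd
        _ ≤ norm0 g + ENNReal.ofReal u * c := le_self_add


lemma rearr_aF {t : ℝ} (ht : t ∈ Set.Ioo (0:ℝ) 1) : rearr aF t = 1 - t := by
  have hset : {s : ℝ | 0 ≤ s ∧ distFun aF s ≤ ENNReal.ofReal t} = Set.Ici (1 - t) := by
    ext s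
    simp only [Set.mem_setOf_eq, Set.mem_Ici]
    constructor
    · rintro ⟨hs0, hs⟩
      rw [distFun_aF hs0] at hs
      have := (ENNReal.ofReal_le_ofReal_iff ht.1.le).mp hs
      linarith
    · intro hs
      have hs0 : 0 ≤ s := le_trans (by linarith [ht.2]) hs
      refine ⟨hs0, ?_⟩
      rw [distFun_aF hs0]
      exact ENNReal.ofReal_le_ofReal (by linarith)
  rw [rearr, hset, csInf_Ici]

lemma rearr_xF {t : ℝ} (ht : t ∈ Set.Ioo (0:ℝ) 1) : rearr xF t = 1 := by
  have hset : {s : ℝ | 0 ≤ s ∧ distFun xF s ≤ ENNReal.ofReal t} = Set.Ici (1:ℝ) := by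
    ext s
    simp only [Set.mem_setOf_eq, Set.mem_Ici]
    constructor
    · rintro ⟨hs0, hs⟩
      by_contra hlt
      push_neg at hlt
      rw [distFun_xF hs0 hlt] at hs
      exact absurd (lt_of_le_of_lt hs (ENNReal.ofReal_lt_one.mpr ht.2)) (lt_irrefl _)
    · intro hs
      exact ⟨le_trans zero_le_one hs, by rw [distFun_xF_ge hs]; exact zero_le⟩
  rw [rearr, hset, csInf_Ici]

lemma memS_aF : Measurable aF ∧ ∃ s > (0:ℝ), distFun aF s < ⊤ :=
  ⟨aF_meas, 1, one_pos, by rw [distFun_aF zero_le_one]; simp⟩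

lemma memS_xF : Measurable xF ∧ ∃ s > (0:ℝ), distFun xF s < ⊤ :=
  ⟨xF_meas, 1, one_pos, by rw [distFun_xF_ge le_rfl]; simp⟩

-- decomposition of aF for the T-argument
noncomputable def gHalf : ℝ → ℝ := fun t => max (1/2 - t) 0
noncomputable def hHalf : ℝ → ℝ := fun t => min (max (1 - t) 0) (1/2)

lemma aF_decomp : aF = gHalf + hHalf := by
  funext t
  simp only [aF, gHalf, hHalf, Pi.add_apply]
  rcases le_total t (1/2) with ht | ht
  · rw [max_eq_left (by linarith : (0:ℝ) ≤ 1/2 - t), max_eq_left (by linarith : (0:ℝ) ≤ 1 - t),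
      min_eq_right (by linarith : (1:ℝ)/2 ≤ 1 - t)]
    ring
  · rw [max_eq_right (by linarith : 1/2 - t ≤ (0:ℝ)),
      min_eq_left (max_le (by linarith) (by norm_num)), zero_add]

lemma memL0_gHalf : MemL0 gHalf := by
  refine ⟨(measurable_const.sub measurable_id).max measurable_const, ?_⟩
  have hsupp : Function.support gHalf = Set.Iio (1/2) := by
    ext t
    simp only [Function.mem_support, gHalf, Set.mem_Iio]
    constructor
    · intro h
      by_contra ht
      push_neg at ht
      exact h (max_eq_right (by linarith))
    · intro h
      exact ne_of_gt (lt_max_iff.mpr (Or.inl (by linarith)))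
  rw [norm0, hsupp, mLeb_apply, Set.Iio_inter_Ioi, Real.volume_Ioo]
  simp

lemma norm0_gHalf_le : norm0 gHalf ≤ ENNReal.ofReal (1/2) := by
  have hsupp : Function.support gHalf ⊆ Set.Iio (1/2) := by
    intro t h
    simp only [Function.mem_support, gHalf] at h
    by_contra ht
    simp only [Set.mem_Iio, not_lt] at ht
    exact h (max_eq_right (by linarith))
  calc norm0 gHalf ≤ mLeb (Set.Iio (1/2)) := measure_mono hsupp
    _ = ENNReal.ofReal (1/2) := by
      rw [mLeb_apply, Set.Iio_inter_Ioi, Real.volume_Ioo]; norm_num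

lemma abs_hHalf_le (t : ℝ) : |hHalf t| ≤ 1/2 := by
  have h0 : 0 ≤ hHalf t := le_min (le_max_right _ _) (by norm_num)
  rw [abs_of_nonneg h0]
  exact min_le_right _ _

lemma memLinf_hHalf : MemLinf hHalf := by
  refine ⟨((measurable_const.sub measurable_id).max measurable_const).min measurable_const, ?_⟩
  have : normInf hHalf ≤ ENNReal.ofReal (1/2) := by
    rw [normInf, eLpNorm_exponent_top]
    exact eLpNormEssSup_le_of_ae_bound (ae_of_all _ fun t => by
      rw [Real.norm_eq_abs]; exact abs_hHalf_le t)
  exact lt_of_le_of_lt this (by simp)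

lemma normInf_hHalf_le : normInf hHalf ≤ ENNReal.ofReal (1/2) := by
  rw [normInf, eLpNorm_exponent_top]
  exact eLpNormEssSup_le_of_ae_bound (ae_of_all _ fun t => by
    rw [Real.norm_eq_abs]; exact abs_hHalf_le t)

lemma Kfun_aF {u : ℝ} (hu : 0 < u) : Kfun u aF = min 1 (ENNReal.ofReal u) :=
  le_antisymm (Kfun_le_min memL0_aF memLinf_aF norm0_aF normInf_aF_le)
    (Kfun_ge_aux hu fun s h0 _ => Or.inl (le_of_eq (distFun_aF h0).symm))

lemma Kfun_xF {u : ℝ} (hu : 0 < u) : Kfun u xF = min 1 (ENNReal.ofReal u) :=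
  le_antisymm (Kfun_le_min memL0_xF memLinf_xF norm0_xF normInf_xF_le)
    (Kfun_ge_aux hu fun s h0 h1 => Or.inr (le_of_eq (distFun_xF h0 h1).symm))

/-- there exist `a, x ∈ S(0,∞)` with the same K-functionals,
with `μ(·; a) < μ(·; x)` on a set of positive measure; consequently no additive
map `T` with `‖T‖_{L₀→L₀} ≤ 1` and `‖T‖_{L∞→L∞} ≤ 1` carries `a` to `x`:
the unit ball of the K-orbit of `a` differs from the unit ball of its orbit. -/
theorem stmt11 :
    ∃ a x : ℝ → ℝ, MemS a ∧ MemS x ∧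
      (∀ u > (0:ℝ), Kfun u a = Kfun u x) ∧
      (∃ E : Set ℝ, MeasurableSet E ∧ 0 < mLeb E ∧ ∀ t ∈ E, rearr a t < rearr x t) ∧
      ¬ ∃ T : (ℝ → ℝ) → (ℝ → ℝ),
          (∀ f g : ℝ → ℝ, T (f + g) = T f + T g) ∧
          (∀ f : ℝ → ℝ, Measurable f → Measurable (T f)) ∧
          (∀ h : ℝ → ℝ, MemL0 h → norm0 (T h) ≤ norm0 h) ∧
          (∀ h : ℝ → ℝ, MemLinf h → normInf (T h) ≤ normInf h) ∧
          T a = x := by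
  
  refine ⟨aF, xF, memS_aF, memS_xF, ?_, ?_, ?_⟩
  · intro u hu
    rw [Kfun_aF hu, Kfun_xF hu]
  · refine ⟨Set.Ioo 0 1, measurableSet_Ioo, ?_, ?_⟩
    · rw [mLeb_apply, Set.inter_eq_left.mpr (fun t ht => ht.1), Real.volume_Ioo]
      norm_num
    · intro t ht
      rw [rearr_aF ht, rearr_xF ht]
      linarith [ht.1]
  · rintro ⟨T, hadd, -, h0, hinf, hTa⟩
    have hx : xF = T gHalf + T hHalf := by rw [← hTa, aF_decomp, hadd]
    have hb0 : norm0 (T gHalf) ≤ ENNReal.ofReal (1/2) :=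
      le_trans (h0 _ memL0_gHalf) norm0_gHalf_le
    have hbi : normInf (T hHalf) ≤ ENNReal.ofReal (1/2) :=
      le_trans (hinf _ memLinf_hHalf) normInf_hHalf_le
    have hone : (1:ℝ≥0∞) ≤ norm0 (T gHalf) := by
      rw [← distFun_xF (by norm_num : (0:ℝ) ≤ 1/2) (by norm_num : (1:ℝ)/2 < 1)]
      exact norm0_ge hx (by norm_num) hbi
    have hcontra := lt_of_le_of_lt (hone.trans hb0) (ENNReal.ofReal_lt_one.mpr (by norm_num))
    exact lt_irrefl _ hcontra
end

section
/- Let a, x ∈ S(0,∞). The following are equivalent: (1) there exists C > 0 such that μ(s; x) ≤ C·μ(s/C; a) for every s > 0; (2) there exists C > 0 such that K_u(x) ≤ C·K_u(a) for every u > 0. -/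
open MeasureTheory Filter Set
open scoped ENNReal NNReal

-- helpers
lemma distFun_anti (f : ℝ → ℝ) {v w : ℝ} (hvw : v ≤ w) : distFun f w ≤ distFun f v :=
  measure_mono fun r hr => lt_of_le_of_lt hvw hr

lemma rearr_nonneg (f : ℝ → ℝ) (t : ℝ) : 0 ≤ rearr f t :=
  Real.sInf_nonneg fun _ hs => hs.1

lemma le_of_forall_ofReal_add (A B : ℝ≥0∞) (hB : B ≠ ⊤)
    (h : ∀ δ : ℝ, 0 < δ → A ≤ B + ENNReal.ofReal δ) : A ≤ B := by
  refine ENNReal.le_of_forall_pos_le_add fun ε hε _ => ?_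
  have h2 := h ε (by exact_mod_cast hε)
  rwa [ENNReal.ofReal_coe_nnreal] at h2

lemma distFun_eq_iSup (f : ℝ → ℝ) (v : ℝ) :
    distFun f v = ⨆ n : ℕ, distFun f (v + 1/(n+1)) := by
  have hUnion : {r : ℝ | v < |f r|} = ⋃ n : ℕ, {r : ℝ | v + 1/((n:ℝ)+1) < |f r|} := by
    ext r
    simp only [mem_setOf_eq, mem_iUnion]
    constructor
    · intro hr
      obtain ⟨n, hn⟩ := exists_nat_one_div_lt (sub_pos.mpr hr)
      exact ⟨n, by linarith⟩
    · rintro ⟨n, hn⟩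
      have hp : (0:ℝ) < 1/((n:ℝ)+1) := by positivity
      linarith
  have hmono : Monotone fun n : ℕ => {r : ℝ | v + 1/((n:ℝ)+1) < |f r|} := by
    intro m n hmn r hr
    have hc : ((m:ℝ)+1) ≤ ((n:ℝ)+1) := by exact_mod_cast Nat.succ_le_succ hmn
    have : (1:ℝ)/((n:ℝ)+1) ≤ 1/((m:ℝ)+1) :=
      one_div_le_one_div_of_le (by positivity) hc
    simp only [mem_setOf_eq] at hr ⊢
    linarith
  rw [distFun, hUnion, hmono.measure_iUnion]
  rfl

lemma exists_distFun_le (f : ℝ → ℝ) (hf : MemS f) {t : ℝ} (ht : 0 < t) :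
    ∃ s, 0 ≤ s ∧ distFun f s ≤ ENNReal.ofReal t := by
  obtain ⟨hmf, s₀, hs₀, hfin⟩ := hf
  have hmeas : ∀ n : ℕ, NullMeasurableSet {r : ℝ | s₀ + n < |f r|} mLeb :=
    fun n => (measurableSet_lt measurable_const hmf.abs).nullMeasurableSet
  have hanti : Antitone fun n : ℕ => {r : ℝ | s₀ + (n:ℝ) < |f r|} := by
    intro m n hmn r hr
    simp only [mem_setOf_eq] at hr ⊢
    have : (m:ℝ) ≤ n := by exact_mod_cast hmn
    linarith
  have hempty : (⋂ n : ℕ, {r : ℝ | s₀ + (n:ℝ) < |f r|}) = ∅ := by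
    ext r
    simp only [mem_iInter, mem_setOf_eq, mem_empty_iff_false, iff_false, not_forall, not_lt]
    obtain ⟨n, hn⟩ := exists_nat_ge (|f r| - s₀)
    exact ⟨n, by linarith⟩
  have htend : Tendsto (fun n : ℕ => distFun f (s₀ + (n:ℝ))) atTop (nhds 0) := by
    have := tendsto_measure_iInter_atTop (μ := mLeb)
      (s := fun n : ℕ => {r : ℝ | s₀ + (n:ℝ) < |f r|}) hmeas hanti
      ⟨0, by simpa [distFun] using hfin.ne⟩
    rw [hempty] at this
    simpa [distFun, Function.comp_def] using this
  have hpos : (0:ℝ≥0∞) < ENNReal.ofReal t := ENNReal.ofReal_pos.mpr ht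
  obtain ⟨n, hn⟩ := (htend.eventually (gt_mem_nhds hpos)).exists
  exact ⟨s₀ + n, by positivity, hn.le⟩

lemma rearr_le_iff (f : ℝ → ℝ) (hf : MemS f) {t v : ℝ} (ht : 0 < t) (hv : 0 ≤ v) :
    rearr f t ≤ v ↔ distFun f v ≤ ENNReal.ofReal t := by
  have hne : {s : ℝ | 0 ≤ s ∧ distFun f s ≤ ENNReal.ofReal t}.Nonempty := by
    obtain ⟨s, hs⟩ := exists_distFun_le f hf ht; exact ⟨s, hs⟩
  have hbd : BddBelow {s : ℝ | 0 ≤ s ∧ distFun f s ≤ ENNReal.ofReal t} :=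
    ⟨0, fun s hs => hs.1⟩
  constructor
  · intro hle
    rw [distFun_eq_iSup]
    apply iSup_le
    intro n
    have hlt : rearr f t < v + 1/((n:ℝ)+1) :=
      lt_of_le_of_lt hle (by have hp : (0:ℝ) < 1/((n:ℝ)+1) := by positivity
                             linarith)
    obtain ⟨s, hs, hslt⟩ := exists_lt_of_csInf_lt hne hlt
    exact le_trans (distFun_anti f hslt.le) hs.2
  · intro hd
    exact csInf_le hbd ⟨hv, hd⟩

noncomputable def Ktil (u : ℝ) (f : ℝ → ℝ) : ℝ≥0∞ :=
  ⨅ (v : ℝ) (_ : 0 < v), distFun f v + ENNReal.ofReal (u * v)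

lemma Ktil_le (u : ℝ) (f : ℝ → ℝ) {v : ℝ} (hv : 0 < v) :
    Ktil u f ≤ distFun f v + ENNReal.ofReal (u * v) :=
  iInf_le_of_le v (iInf_le_of_le hv le_rfl)

lemma le_Ktil {u : ℝ} {f : ℝ → ℝ} {A : ℝ≥0∞}
    (h : ∀ v : ℝ, 0 < v → A ≤ distFun f v + ENNReal.ofReal (u * v)) : A ≤ Ktil u f :=
  le_iInf fun v => le_iInf fun hv => h v hv

lemma Kfun_le_s12 (f : ℝ → ℝ) (hmf : Measurable f) {u v : ℝ} (hu : 0 ≤ u) (hv : 0 < v) :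
    Kfun u f ≤ distFun f v + ENNReal.ofReal (u * v) := by
  by_cases hD : distFun f v = ⊤
  · rw [hD]; simp
  set h : ℝ → ℝ := fun r => max (-v) (min v (f r)) with hh_def
  set g : ℝ → ℝ := fun r => f r - h r with hg_def
  have hmh : Measurable h := measurable_const.max (measurable_const.min hmf)
  have hbound : ∀ r, |h r| ≤ v := by
    intro r
    rw [abs_le]
    exact ⟨le_max_left _ _, max_le (by linarith) (min_le_left _ _)⟩
  have hsupp : Function.support g ⊆ {r | v < |f r|} := by
    intro r hr
    by_contra hcon
    apply hr
    simp only [mem_setOf_eq, not_lt] at hcon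
    obtain ⟨h1, h2⟩ := abs_le.mp hcon
    have hhr : h r = f r := by
      simp only [hh_def]
      rw [min_eq_right h2, max_eq_right h1]
    simp [hg_def, hhr]
  have hgL0 : MemL0 g :=
    ⟨hmf.sub hmh, lt_of_le_of_lt (measure_mono hsupp) (lt_top_iff_ne_top.mpr hD)⟩
  have hhinf_le : normInf h ≤ ENNReal.ofReal v := by
    rw [normInf, eLpNorm_exponent_top]
    exact eLpNormEssSup_le_of_ae_bound (Filter.Eventually.of_forall fun r => by
      rw [Real.norm_eq_abs]; exact hbound r)
  have hhLinf : MemLinf h := ⟨hmh, lt_of_le_of_lt hhinf_le ENNReal.ofReal_lt_top⟩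
  have hfe : f = g + h := by funext r; simp [hg_def]
  calc Kfun u f ≤ norm0 g + ENNReal.ofReal u * normInf h := by
        apply iInf_le_of_le g; apply iInf_le_of_le h
        exact iInf_le_of_le hgL0 (iInf_le_of_le hhLinf (iInf_le_of_le hfe le_rfl))
    _ ≤ distFun f v + ENNReal.ofReal (u * v) := by
        refine add_le_add (measure_mono hsupp) ?_
        rw [ENNReal.ofReal_mul hu]
        exact mul_le_mul_right hhinf_le _

lemma Ktil_le_Kfun (f : ℝ → ℝ) {u : ℝ} (hu : 0 < u) : Ktil u f ≤ Kfun u f := by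
  rw [Kfun]
  refine le_iInf fun g => le_iInf fun h => le_iInf fun hg => le_iInf fun hh =>
    le_iInf fun hfe => ?_
  have hβtop : normInf h ≠ ⊤ := hh.2.ne
  have hBfin : norm0 g + ENNReal.ofReal u * normInf h ≠ ⊤ :=
    ENNReal.add_ne_top.mpr ⟨hg.2.ne, ENNReal.mul_ne_top ENNReal.ofReal_ne_top hβtop⟩
  apply le_of_forall_ofReal_add _ _ hBfin
  intro δ hδ
  set β := (normInf h).toReal with hβdef
  have hβ0 : 0 ≤ β := ENNReal.toReal_nonneg
  have hv : 0 < β + δ / u := by positivity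
  refine le_trans (Ktil_le u f hv) ?_
  have haebd : ∀ᵐ r ∂mLeb, |h r| ≤ β := by
    filter_upwards [ae_le_eLpNormEssSup (f := h) (μ := mLeb)] with r hr
    have h1 : (‖h r‖₊ : ℝ≥0∞) ≤ normInf h := by
      rw [normInf, eLpNorm_exponent_top]; exact hr
    have h2 := ENNReal.toReal_mono hβtop h1
    simpa [Real.norm_eq_abs] using h2
  have hdle : distFun f (β + δ / u) ≤ norm0 g := by
    rw [distFun, norm0]
    apply measure_mono_ae
    filter_upwards [haebd] with r hr
    intro hmem
    have hmem' : β + δ / u < |f r| := hmem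
    show g r ≠ 0
    intro hg0
    have hfr : f r = h r := by
      have := congrFun hfe r
      simp only [Pi.add_apply, hg0, zero_add] at this
      exact this
    rw [hfr] at hmem'
    have hpos : 0 < δ / u := by positivity
    linarith [abs_nonneg (h r)]
  have harith : ENNReal.ofReal (u * (β + δ / u)) =
      ENNReal.ofReal u * normInf h + ENNReal.ofReal δ := by
    have : u * (β + δ / u) = u * β + δ := by field_simp
    rw [this, ENNReal.ofReal_add (by positivity) hδ.le, ENNReal.ofReal_mul hu.le,
      hβdef, ENNReal.ofReal_toReal hβtop]
  rw [harith, ← add_assoc]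
  exact add_le_add_left (add_le_add_left hdle _) _

lemma distA (a x : ℝ → ℝ) (ha : MemS a) (hx : MemS x) {C : ℝ} (hC : 0 < C)
    (h1 : ∀ s > (0:ℝ), rearr x s ≤ C * rearr a (s / C)) {v : ℝ} (hv : 0 ≤ v) :
    distFun x (C * v) ≤ ENNReal.ofReal C * distFun a v := by
  by_cases hD : distFun a v = ⊤
  · rw [hD, ENNReal.mul_top (ENNReal.ofReal_pos.mpr hC).ne']
    exact le_top
  set t := (distFun a v).toReal with htdef
  have hDt : distFun a v = ENNReal.ofReal t := (ENNReal.ofReal_toReal hD).symm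
  have ht0 : 0 ≤ t := ENNReal.toReal_nonneg
  have key : ∀ τ : ℝ, t < τ → distFun x (C * v) ≤ ENNReal.ofReal (C * τ) := by
    intro τ hτ
    have hτ0 : 0 < τ := lt_of_le_of_lt ht0 hτ
    have hda : distFun a v ≤ ENNReal.ofReal τ := by
      rw [hDt]; exact ENNReal.ofReal_le_ofReal hτ.le
    have hra : rearr a τ ≤ v := (rearr_le_iff a ha hτ0 hv).mpr hda
    have hs : (0:ℝ) < C * τ := by positivity
    have h2 := h1 (C * τ) hs
    rw [mul_div_cancel_left₀ _ hC.ne'] at h2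
    have hrx : rearr x (C * τ) ≤ C * v :=
      le_trans h2 (mul_le_mul_of_nonneg_left hra hC.le)
    exact (rearr_le_iff x hx hs (by positivity)).mp hrx
  rw [hDt, ← ENNReal.ofReal_mul hC.le]
  apply le_of_forall_ofReal_add _ _ ENNReal.ofReal_ne_top
  intro δ hδ
  have hkey := key (t + δ/C) (lt_add_of_pos_right _ (by positivity))
  refine le_trans hkey ?_
  have : C * (t + δ/C) = C * t + δ := by field_simp
  rw [this, ENNReal.ofReal_add (by positivity) hδ.le]


/-- for `a, x ∈ S(0,∞)`, the following are equivalent: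
(1) `μ(s; x) ≤ C·μ(s/C; a)` for some `C > 0` and all `s > 0`;
(2) `K_u(x) ≤ C·K_u(a)` for some `C > 0` and all `u > 0`. -/
theorem stmt12 (a x : ℝ → ℝ) (ha : MemS a) (hx : MemS x) :
    (∃ C > (0:ℝ), ∀ s > (0:ℝ), rearr x s ≤ C * rearr a (s / C)) ↔
    (∃ C > (0:ℝ), ∀ u > (0:ℝ), Kfun u x ≤ ENNReal.ofReal C * Kfun u a) := by
  constructor
  · rintro ⟨C, hC, h1⟩
    refine ⟨C, hC, fun u hu => ?_⟩
    have hKt : Ktil u a ≤ Kfun u a := Ktil_le_Kfun a hu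
    have main : Kfun u x ≤ ENNReal.ofReal C * Ktil u a := by
      refine ENNReal.le_of_forall_pos_le_add fun ε hε hfin => ?_
      have hKfin : Ktil u a ≠ ⊤ := by
        intro htop
        rw [htop, ENNReal.mul_top (ENNReal.ofReal_pos.mpr hC).ne'] at hfin
        exact (lt_irrefl _ hfin).elim
      have hεC : (0:ℝ) < (ε:ℝ) / C := by positivity
      have hlt : Ktil u a < Ktil u a + ENNReal.ofReal ((ε:ℝ)/C) :=
        ENNReal.lt_add_right hKfin (ENNReal.ofReal_pos.mpr hεC).ne'
      obtain ⟨v, hv, hterm⟩ : ∃ v : ℝ, 0 < v ∧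
          distFun a v + ENNReal.ofReal (u*v) < Ktil u a + ENNReal.ofReal ((ε:ℝ)/C) := by
        by_contra hcon
        push_neg at hcon
        have := le_Ktil (f := a) (u := u)
          (A := Ktil u a + ENNReal.ofReal ((ε:ℝ)/C)) (fun v hv => hcon v hv)
        exact absurd this (not_le.mpr hlt)
      have hCv : 0 < C * v := by positivity
      calc Kfun u x ≤ distFun x (C*v) + ENNReal.ofReal (u * (C*v)) :=
            Kfun_le_s12 x hx.1 hu.le hCv
        _ ≤ ENNReal.ofReal C * distFun a v + ENNReal.ofReal C * ENNReal.ofReal (u*v) := by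
            refine add_le_add (distA a x ha hx hC h1 hv.le) ?_
            rw [← ENNReal.ofReal_mul hC.le]
            exact ENNReal.ofReal_le_ofReal (by nlinarith)
        _ = ENNReal.ofReal C * (distFun a v + ENNReal.ofReal (u*v)) := by rw [mul_add]
        _ ≤ ENNReal.ofReal C * (Ktil u a + ENNReal.ofReal ((ε:ℝ)/C)) :=
            mul_le_mul_right hterm.le _
        _ = ENNReal.ofReal C * Ktil u a + ENNReal.ofReal C * ENNReal.ofReal ((ε:ℝ)/C) := by
            rw [mul_add]
        _ ≤ ENNReal.ofReal C * Ktil u a + ε := by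
            refine add_le_add_right ?_ _
            rw [← ENNReal.ofReal_mul hC.le, mul_div_cancel₀ _ hC.ne',
              ENNReal.ofReal_coe_nnreal]
    exact le_trans main (mul_le_mul_right hKt _)
  · rintro ⟨C, hC, h2⟩
    have hC3 : (0:ℝ) < 3*C := by linarith
    refine ⟨3*C, hC3, fun s hs => ?_⟩
    set t := s / (3*C) with htdef
    have ht : 0 < t := by positivity
    have hst : s = 3*C*t := by rw [htdef, mul_div_assoc']; exact (mul_div_cancel_left₀ s hC3.ne').symm
    set τ := rearr a t with hτdef
    have hτ0 : 0 ≤ τ := rearr_nonneg a t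
    have hgoal : distFun x (3*C*τ) ≤ ENNReal.ofReal s → rearr x s ≤ 3*C*τ :=
      fun h => (rearr_le_iff x hx hs (by positivity)).mpr h
    apply hgoal
    by_contra hcon
    push_neg at hcon
    rcases eq_or_lt_of_le hτ0 with hτz | hτpos
    · -- τ = 0
      rw [← hτz, mul_zero] at hcon
      have hsup : distFun x 0 = ⨆ n : ℕ, distFun x (0 + 1/((n:ℝ)+1)) := distFun_eq_iSup x 0
      rw [hsup] at hcon
      obtain ⟨n, hn⟩ := lt_iSup_iff.mp hcon
      set ε := (0:ℝ) + 1/((n:ℝ)+1) with hεdef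
      have hε : 0 < ε := by positivity
      set u := s / ε with hudef
      have hu : 0 < u := by positivity
      have hKa : Kfun u a ≤ ENNReal.ofReal t := by
        apply le_of_forall_ofReal_add _ _ ENNReal.ofReal_ne_top
        intro δ hδ
        have hv0 : 0 < δ / u := by positivity
        have hda : distFun a (δ/u) ≤ ENNReal.ofReal t := by
          refine (rearr_le_iff a ha ht hv0.le).mp ?_
          rw [← hτdef, ← hτz]
          exact hv0.le
        refine le_trans (Kfun_le_s12 a ha.1 hu.le hv0) ?_
        refine add_le_add hda (le_of_eq ?_)
        rw [mul_div_cancel₀ _ hu.ne']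
      have hKx : Kfun u x ≤ ENNReal.ofReal (C*t) := by
        refine le_trans (h2 u hu) ?_
        rw [ENNReal.ofReal_mul hC.le]
        exact mul_le_mul_right hKa _
      have hlow : ENNReal.ofReal s ≤ Ktil u x := by
        apply le_Ktil
        intro v hv
        rcases le_or_gt v ε with hvε | hvε
        · exact le_trans (le_trans hn.le (distFun_anti x hvε)) le_self_add
        · refine le_trans ?_ le_add_self
          apply ENNReal.ofReal_le_ofReal
          have : u * ε = s := by rw [hudef]; field_simp
          nlinarith
      have hchain : ENNReal.ofReal s ≤ ENNReal.ofReal (C*t) :=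
        le_trans hlow (le_trans (Ktil_le_Kfun x hu) hKx)
      have : ENNReal.ofReal (C*t) < ENNReal.ofReal s := by
        rw [ENNReal.ofReal_lt_ofReal_iff hs, hst]
        nlinarith
      exact absurd hchain (not_le.mpr this)
    · -- τ > 0
      set u := t / τ with hudef
      have hu : 0 < u := by positivity
      have hda : distFun a τ ≤ ENNReal.ofReal t :=
        (rearr_le_iff a ha ht hτ0).mp le_rfl
      have hKa : Kfun u a ≤ ENNReal.ofReal (2*t) := by
        refine le_trans (Kfun_le_s12 a ha.1 hu.le hτpos) ?_
        have huτ : u * τ = t := by rw [hudef]; field_simp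
        rw [huτ]
        calc distFun a τ + ENNReal.ofReal t ≤ ENNReal.ofReal t + ENNReal.ofReal t :=
              add_le_add_left hda _
          _ = ENNReal.ofReal (2*t) := by rw [← ENNReal.ofReal_add ht.le ht.le]; ring_nf
      have hKx : Kfun u x ≤ ENNReal.ofReal (2*C*t) := by
        refine le_trans (h2 u hu) ?_
        rw [show (2:ℝ)*C*t = C*(2*t) by ring, ENNReal.ofReal_mul hC.le]
        exact mul_le_mul_right hKa _
      have hlow : ENNReal.ofReal s ≤ Ktil u x := by
        apply le_Ktil
        intro v hv
        rcases le_or_gt v (3*C*τ) with hvτ | hvτ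
        · exact le_trans (le_trans hcon.le (distFun_anti x hvτ)) le_self_add
        · refine le_trans ?_ le_add_self
          apply ENNReal.ofReal_le_ofReal
          have huτ3 : u * (3*C*τ) = s := by rw [hudef, hst]; field_simp
          nlinarith
      have hchain : ENNReal.ofReal s ≤ ENNReal.ofReal (2*C*t) :=
        le_trans hlow (le_trans (Ktil_le_Kfun x hu) hKx)
      have : ENNReal.ofReal (2*C*t) < ENNReal.ofReal s := by
        rw [ENNReal.ofReal_lt_ofReal_iff hs, hst]
        nlinarith
      exact absurd hchain (not_le.mpr this)
end
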